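/- Let C_e and E_e be symmetric n×n real matrices and M an n×n real orthogonal matrix. Set A := Mᵀ C_e M and ℰ := Mᵀ E_e M. Then the perturbation of the commutator generator satisfies ‖[A + ℰ, diag(A + ℰ)] − [A, diag(A)]‖_F ≤ 4‖C_e‖₂ ‖E_e‖_F + 2‖E_e‖_F², a bound that involves only the trace-free perturbation and is independent of any isotropic component. -/

import Mathlib

open Matrix

/-- The diagonal matrix whose diagonal agrees with `X`. -/
noncomputable def diagPart {n : ℕ} (X : Matrix (Fin n) (Fin n) ℝ) :
    Matrix (Fin n) (Fin n) ℝ :=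
  Matrix.diagonal (fun i => X i i)

/-- Frobenius norm of a real square matrix. -/
noncomputable def frobNorm {n : ℕ} (X : Matrix (Fin n) (Fin n) ℝ) : ℝ :=
  Real.sqrt (∑ i, ∑ j, (X i j) ^ 2)

/-- Spectral (ℓ²-operator) norm of a real square matrix. -/
noncomputable def specNorm {n : ℕ} (X : Matrix (Fin n) (Fin n) ℝ) : ℝ :=
  ‖LinearMap.toContinuousLinearMap (Matrix.toEuclideanLin X)‖

namespace CommGenAux

variable {n : ℕ}

lemma norm_withlp (w : Fin n → ℝ) :
    ‖(WithLp.equiv 2 (Fin n → ℝ)).symm w‖ = Real.sqrt (∑ i, (w i) ^ 2) := by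
  rw [EuclideanSpace.norm_eq]
  simp [Real.norm_eq_abs, sq_abs]

lemma enorm_mulVec_le (X : Matrix (Fin n) (Fin n) ℝ) (v : Fin n → ℝ) :
    Real.sqrt (∑ i, (X.mulVec v i) ^ 2) ≤ specNorm X * Real.sqrt (∑ i, (v i) ^ 2) := by
  have h := (LinearMap.toContinuousLinearMap (Matrix.toEuclideanLin X)).le_opNorm
      ((WithLp.equiv 2 (Fin n → ℝ)).symm v)
  rwa [LinearMap.coe_toContinuousLinearMap', WithLp.equiv_symm_apply, Matrix.toEuclideanLin_apply_piLp_toLp,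
    ← WithLp.equiv_symm_apply,
    norm_withlp, norm_withlp] at h

lemma enorm_mulVec_orth {M : Matrix (Fin n) (Fin n) ℝ} (hM : Mᵀ * M = 1) (v : Fin n → ℝ) :
    Real.sqrt (∑ i, (M.mulVec v i) ^ 2) = Real.sqrt (∑ i, (v i) ^ 2) := by
  congr 1
  have : ∀ w : Fin n → ℝ, ∑ i, (w i) ^ 2 = w ⬝ᵥ w := by
    intro w; simp [dotProduct, sq]
  rw [this, this, Matrix.dotProduct_mulVec, ← Matrix.mulVec_transpose,
    Matrix.mulVec_mulVec, hM, Matrix.one_mulVec]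

lemma colsq_le (X : Matrix (Fin n) (Fin n) ℝ) (j : Fin n) :
    ∑ i, (X i j) ^ 2 ≤ specNorm X ^ 2 := by
  have h := enorm_mulVec_le X (Pi.single j 1)
  rw [Matrix.mulVec_single] at h
  have h1 : ∑ i, ((Pi.single j 1 : Fin n → ℝ) i) ^ 2 = 1 := by
    rw [Finset.sum_eq_single j]
    · simp
    · intro b _ hb; simp [Pi.single_eq_of_ne hb]
    · simp
  rw [h1, Real.sqrt_one, mul_one] at h
  have hnn : (0 : ℝ) ≤ ∑ i, (X i j) ^ 2 := by positivity
  calc ∑ i, (X i j) ^ 2 = Real.sqrt (∑ i, (X i j * 1) ^ 2) ^ 2 := by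
        rw [Real.sq_sqrt (by positivity)]; simp
    _ ≤ specNorm X ^ 2 := by
        refine pow_le_pow_left₀ (Real.sqrt_nonneg _) h 2

lemma specNorm_nonneg (X : Matrix (Fin n) (Fin n) ℝ) : 0 ≤ specNorm X := norm_nonneg _

lemma specNorm_conj_le (Ce M : Matrix (Fin n) (Fin n) ℝ) (hM : Mᵀ * M = 1) :
    specNorm (Mᵀ * Ce * M) ≤ specNorm Ce := by
  have hMMt : M * Mᵀ = 1 := mul_eq_one_comm.mp hM
  have hMt : Mᵀᵀ * Mᵀ = 1 := by rwa [Matrix.transpose_transpose]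
  refine ContinuousLinearMap.opNorm_le_bound _ (specNorm_nonneg Ce) fun x => ?_
  set v : Fin n → ℝ := WithLp.equiv 2 (Fin n → ℝ) x with hv
  have hx : x = (WithLp.equiv 2 (Fin n → ℝ)).symm v := rfl
  rw [hx, LinearMap.coe_toContinuousLinearMap', WithLp.equiv_symm_apply, Matrix.toEuclideanLin_apply_piLp_toLp,
    ← WithLp.equiv_symm_apply,
    norm_withlp, norm_withlp]
  have hsplit : (Mᵀ * Ce * M) *ᵥ v = Mᵀ *ᵥ (Ce *ᵥ (M *ᵥ v)) := by
    rw [Matrix.mulVec_mulVec, Matrix.mulVec_mulVec]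
  rw [hsplit, enorm_mulVec_orth hMt]
  calc Real.sqrt (∑ i, ((Ce *ᵥ (M *ᵥ v)) i) ^ 2)
      ≤ specNorm Ce * Real.sqrt (∑ i, ((M *ᵥ v) i) ^ 2) := enorm_mulVec_le _ _
    _ = specNorm Ce * Real.sqrt (∑ i, (v i) ^ 2) := by rw [enorm_mulVec_orth hM]

lemma frob_nonneg (X : Matrix (Fin n) (Fin n) ℝ) : 0 ≤ frobNorm X := Real.sqrt_nonneg _

lemma frob_sq (X : Matrix (Fin n) (Fin n) ℝ) :
    frobNorm X ^ 2 = ∑ i, ∑ j, (X i j) ^ 2 := by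
  rw [frobNorm, Real.sq_sqrt (by positivity)]

lemma frob_eq_norm (X : Matrix (Fin n) (Fin n) ℝ) :
    frobNorm X = ‖(WithLp.equiv 2 (Fin n × Fin n → ℝ)).symm (fun p => X p.1 p.2)‖ := by
  rw [EuclideanSpace.norm_eq, frobNorm]
  congr 1
  rw [Fintype.sum_prod_type]
  simp [Real.norm_eq_abs, sq_abs, WithLp.equiv_symm_apply, PiLp.toLp_apply]

lemma frob_add_le (X Y : Matrix (Fin n) (Fin n) ℝ) :
    frobNorm (X + Y) ≤ frobNorm X + frobNorm Y := by
  rw [frob_eq_norm, frob_eq_norm, frob_eq_norm]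
  have : ((WithLp.equiv 2 (Fin n × Fin n → ℝ)).symm (fun p => (X + Y) p.1 p.2))
      = (WithLp.equiv 2 (Fin n × Fin n → ℝ)).symm (fun p => X p.1 p.2)
        + (WithLp.equiv 2 (Fin n × Fin n → ℝ)).symm (fun p => Y p.1 p.2) := rfl
  rw [this]
  exact norm_add_le _ _

lemma frob_transpose (X : Matrix (Fin n) (Fin n) ℝ) : frobNorm Xᵀ = frobNorm X := by
  rw [frobNorm, frobNorm]
  congr 1
  rw [Finset.sum_comm]
  simp [Matrix.transpose_apply]

lemma frob_sub_le (X Y : Matrix (Fin n) (Fin n) ℝ) :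
    frobNorm (X - Y) ≤ frobNorm X + frobNorm Y := by
  have hneg : frobNorm (-Y) = frobNorm Y := by
    rw [frobNorm, frobNorm]; congr 1; simp
  calc frobNorm (X - Y) = frobNorm (X + (-Y)) := by rw [sub_eq_add_neg]
    _ ≤ frobNorm X + frobNorm (-Y) := frob_add_le _ _
    _ = frobNorm X + frobNorm Y := by rw [hneg]

/-- columns bounded by `c`, diagonal ℓ² bounded by `b`. -/
lemma frob_mul_diag_le (X : Matrix (Fin n) (Fin n) ℝ) (d : Fin n → ℝ) (c b : ℝ)
    (hc : 0 ≤ c) (hb : 0 ≤ b)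
    (hX : ∀ j, ∑ i, (X i j) ^ 2 ≤ c ^ 2) (hd : ∑ j, (d j) ^ 2 ≤ b ^ 2) :
    frobNorm (X * Matrix.diagonal d) ≤ c * b := by
  have key : ∑ i, ∑ j, ((X * Matrix.diagonal d) i j) ^ 2 ≤ (c * b) ^ 2 := by
    have : ∀ i j, ((X * Matrix.diagonal d) i j) ^ 2 = (X i j) ^ 2 * (d j) ^ 2 := by
      intro i j; rw [Matrix.mul_diagonal]; ring
    simp_rw [this]
    rw [Finset.sum_comm]
    calc ∑ j, ∑ i, (X i j) ^ 2 * (d j) ^ 2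
        = ∑ j, (∑ i, (X i j) ^ 2) * (d j) ^ 2 := by
          congr 1; ext j; rw [Finset.sum_mul]
      _ ≤ ∑ j, c ^ 2 * (d j) ^ 2 := by
          refine Finset.sum_le_sum fun j _ => ?_
          exact mul_le_mul_of_nonneg_right (hX j) (by positivity)
      _ = c ^ 2 * ∑ j, (d j) ^ 2 := by rw [Finset.mul_sum]
      _ ≤ c ^ 2 * b ^ 2 := by
          exact mul_le_mul_of_nonneg_left hd (by positivity)
      _ = (c * b) ^ 2 := by ring
  calc frobNorm (X * Matrix.diagonal d) ≤ Real.sqrt ((c * b) ^ 2) :=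
        Real.sqrt_le_sqrt key
    _ = c * b := Real.sqrt_sq (by positivity)

/-- diagonal entries bounded by `c`, matrix Frobenius bounded by `b`. -/
lemma frob_mul_diag_le' (X : Matrix (Fin n) (Fin n) ℝ) (d : Fin n → ℝ) (c b : ℝ)
    (hc : 0 ≤ c) (hb : 0 ≤ b)
    (hd : ∀ j, (d j) ^ 2 ≤ c ^ 2) (hX : ∑ i, ∑ j, (X i j) ^ 2 ≤ b ^ 2) :
    frobNorm (X * Matrix.diagonal d) ≤ c * b := by
  have key : ∑ i, ∑ j, ((X * Matrix.diagonal d) i j) ^ 2 ≤ (c * b) ^ 2 := by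
    have : ∀ i j, ((X * Matrix.diagonal d) i j) ^ 2 = (X i j) ^ 2 * (d j) ^ 2 := by
      intro i j; rw [Matrix.mul_diagonal]; ring
    simp_rw [this]
    calc ∑ i, ∑ j, (X i j) ^ 2 * (d j) ^ 2
        ≤ ∑ i, ∑ j, (X i j) ^ 2 * c ^ 2 := by
          refine Finset.sum_le_sum fun i _ => Finset.sum_le_sum fun j _ => ?_
          exact mul_le_mul_of_nonneg_left (hd j) (by positivity)
      _ = (∑ i, ∑ j, (X i j) ^ 2) * c ^ 2 := by
          rw [Finset.sum_mul]; congr 1; ext i; rw [Finset.sum_mul]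
      _ ≤ b ^ 2 * c ^ 2 := mul_le_mul_of_nonneg_right hX (by positivity)
      _ = (c * b) ^ 2 := by ring
  calc frobNorm (X * Matrix.diagonal d) ≤ Real.sqrt ((c * b) ^ 2) :=
        Real.sqrt_le_sqrt key
    _ = c * b := Real.sqrt_sq (by positivity)

lemma sum_sq_eq_trace (X : Matrix (Fin n) (Fin n) ℝ) :
    ∑ i, ∑ j, (X i j) ^ 2 = Matrix.trace (Xᵀ * X) := by
  simp only [Matrix.trace, Matrix.diag, Matrix.mul_apply, Matrix.transpose_apply, sq]
  exact Finset.sum_comm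

lemma frobSq_conj (Ee M : Matrix (Fin n) (Fin n) ℝ) (hM : Mᵀ * M = 1) :
    ∑ i, ∑ j, ((Mᵀ * Ee * M) i j) ^ 2 = ∑ i, ∑ j, (Ee i j) ^ 2 := by
  have hMMt : M * Mᵀ = 1 := mul_eq_one_comm.mp hM
  rw [sum_sq_eq_trace, sum_sq_eq_trace]
  have h1 : (Mᵀ * Ee * M)ᵀ * (Mᵀ * Ee * M) = Mᵀ * (Eeᵀ * Ee) * M := by
    rw [Matrix.transpose_mul, Matrix.transpose_mul, Matrix.transpose_transpose]
    calc Mᵀ * (Eeᵀ * Mᵀᵀ) * (Mᵀ * Ee * M)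
        = Mᵀ * Eeᵀ * ((M * Mᵀ) * (Ee * M)) := by
          rw [Matrix.transpose_transpose]; noncomm_ring
      _ = Mᵀ * (Eeᵀ * Ee) * M := by rw [hMMt, one_mul]; noncomm_ring
  rw [h1]
  calc Matrix.trace (Mᵀ * (Eeᵀ * Ee) * M) = Matrix.trace (Mᵀ * ((Eeᵀ * Ee) * M)) := by
        rw [mul_assoc]
    _ = Matrix.trace ((Eeᵀ * Ee) * M * Mᵀ) := by rw [Matrix.trace_mul_comm, mul_assoc]
    _ = Matrix.trace (Eeᵀ * Ee) := by rw [mul_assoc, hMMt, mul_one]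

end CommGenAux

open CommGenAux in
/-- **Input mapping bound**: the perturbation of the commutator generator is controlled
by the trace-free perturbation only:
`‖[A+ℰ, diag(A+ℰ)] − [A, diag A]‖_F ≤ 4‖C_e‖₂‖E_e‖_F + 2‖E_e‖_F²`. -/
theorem commGen_perturbation_bound {n : ℕ}
    (Ce Ee M : Matrix (Fin n) (Fin n) ℝ)
    (hCe : Ceᵀ = Ce) (hEe : Eeᵀ = Ee) (hM : Mᵀ * M = 1) :
    frobNorm (((Mᵀ * Ce * M + Mᵀ * Ee * M) * diagPart (Mᵀ * Ce * M + Mᵀ * Ee * M)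
        - diagPart (Mᵀ * Ce * M + Mᵀ * Ee * M) * (Mᵀ * Ce * M + Mᵀ * Ee * M))
      - ((Mᵀ * Ce * M) * diagPart (Mᵀ * Ce * M)
        - diagPart (Mᵀ * Ce * M) * (Mᵀ * Ce * M)))
      ≤ 4 * specNorm Ce * frobNorm Ee + 2 * frobNorm Ee ^ 2 := by
  set A := Mᵀ * Ce * M with hA
  set E := Mᵀ * Ee * M with hE
  set s := specNorm Ce with hs
  set f := frobNorm Ee with hf
  have hs0 : 0 ≤ s := specNorm_nonneg Ce
  have hf0 : 0 ≤ f := frob_nonneg Ee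
  -- symmetry of A and E
  have hAsym : Aᵀ = A := by
    rw [hA, Matrix.transpose_mul, Matrix.transpose_mul, Matrix.transpose_transpose, hCe,
      mul_assoc]
  have hEsym : Eᵀ = E := by
    rw [hE, Matrix.transpose_mul, Matrix.transpose_mul, Matrix.transpose_transpose, hEe,
      mul_assoc]
  -- column bounds for A
  have hcolA : ∀ j, ∑ i, (A i j) ^ 2 ≤ s ^ 2 := by
    intro j
    calc ∑ i, (A i j) ^ 2 ≤ specNorm A ^ 2 := colsq_le A j
      _ ≤ s ^ 2 := pow_le_pow_left₀ (specNorm_nonneg A) (specNorm_conj_le Ce M hM) 2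
  have hdiagA : ∀ j, (A j j) ^ 2 ≤ s ^ 2 := by
    intro j
    refine le_trans ?_ (hcolA j)
    exact Finset.single_le_sum (f := fun i => (A i j) ^ 2) (fun i _ => by positivity)
      (Finset.mem_univ j)
  -- Frobenius bounds for E
  have hEfrob : ∑ i, ∑ j, (E i j) ^ 2 ≤ f ^ 2 := by
    rw [hE, frobSq_conj Ee M hM, hf, frob_sq]
  have hcolE : ∀ j, ∑ i, (E i j) ^ 2 ≤ f ^ 2 := by
    intro j
    refine le_trans ?_ hEfrob
    rw [Finset.sum_comm]
    exact Finset.single_le_sum (f := fun j' => ∑ i, (E i j') ^ 2)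
      (fun j' _ => by positivity) (Finset.mem_univ j)
  have hdiagE : ∑ j, (E j j) ^ 2 ≤ f ^ 2 := by
    refine le_trans (Finset.sum_le_sum fun j _ => ?_) hEfrob
    exact Finset.single_le_sum (f := fun j' => (E j j') ^ 2) (fun j' _ => by positivity)
      (Finset.mem_univ j)
  -- diag parts
  set dA : Fin n → ℝ := fun i => A i i with hdA
  set dE : Fin n → ℝ := fun i => E i i with hdE
  have hDsum : diagPart (A + E) = Matrix.diagonal dA + Matrix.diagonal dE := by
    ext i k
    by_cases h : i = k <;>
      simp [diagPart, Matrix.diagonal_apply, h, Matrix.add_apply, dA, dE]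
  have hDA : diagPart A = Matrix.diagonal dA := rfl
  -- the six term bounds
  have t1 : frobNorm (A * Matrix.diagonal dE) ≤ s * f :=
    frob_mul_diag_le A dE s f hs0 hf0 hcolA hdiagE
  have t3 : frobNorm (E * Matrix.diagonal dA) ≤ s * f :=
    frob_mul_diag_le' E dA s f hs0 hf0 hdiagA hEfrob
  have t5 : frobNorm (E * Matrix.diagonal dE) ≤ f * f :=
    frob_mul_diag_le E dE f f hf0 hf0 hcolE hdiagE
  -- left-multiplication versions via transpose
  have flip : ∀ (X : Matrix (Fin n) (Fin n) ℝ) (d : Fin n → ℝ), Xᵀ = X →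
      frobNorm (Matrix.diagonal d * X) = frobNorm (X * Matrix.diagonal d) := by
    intro X d hX
    rw [← frob_transpose (Matrix.diagonal d * X), Matrix.transpose_mul, hX,
      Matrix.diagonal_transpose]
  have t2 : frobNorm (Matrix.diagonal dE * A) ≤ s * f := by rw [flip A dE hAsym]; exact t1
  have t4 : frobNorm (Matrix.diagonal dA * E) ≤ s * f := by rw [flip E dA hEsym]; exact t3
  have t6 : frobNorm (Matrix.diagonal dE * E) ≤ f * f := by rw [flip E dE hEsym]; exact t5
  -- algebraic decomposition
  have hdecomp :
      ((A + E) * diagPart (A + E) - diagPart (A + E) * (A + E))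
        - (A * diagPart A - diagPart A * A)
      = ((A * Matrix.diagonal dE - Matrix.diagonal dE * A)
          + (E * Matrix.diagonal dA - Matrix.diagonal dA * E))
        + (E * Matrix.diagonal dE - Matrix.diagonal dE * E) := by
    rw [hDsum, hDA]; noncomm_ring
  rw [hdecomp]
  calc frobNorm (((A * Matrix.diagonal dE - Matrix.diagonal dE * A)
          + (E * Matrix.diagonal dA - Matrix.diagonal dA * E))
        + (E * Matrix.diagonal dE - Matrix.diagonal dE * E))
      ≤ frobNorm ((A * Matrix.diagonal dE - Matrix.diagonal dE * A)
          + (E * Matrix.diagonal dA - Matrix.diagonal dA * E))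
        + frobNorm (E * Matrix.diagonal dE - Matrix.diagonal dE * E) := frob_add_le _ _
    _ ≤ (frobNorm (A * Matrix.diagonal dE - Matrix.diagonal dE * A)
          + frobNorm (E * Matrix.diagonal dA - Matrix.diagonal dA * E))
        + frobNorm (E * Matrix.diagonal dE - Matrix.diagonal dE * E) := by
          gcongr; exact frob_add_le _ _
    _ ≤ ((frobNorm (A * Matrix.diagonal dE) + frobNorm (Matrix.diagonal dE * A))
          + (frobNorm (E * Matrix.diagonal dA) + frobNorm (Matrix.diagonal dA * E)))
        + (frobNorm (E * Matrix.diagonal dE) + frobNorm (Matrix.diagonal dE * E)) := by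
          gcongr <;> exact frob_sub_le _ _
    _ ≤ ((s * f + s * f) + (s * f + s * f)) + (f * f + f * f) := by
          gcongr
    _ = 4 * s * f + 2 * f ^ 2 := by ring
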